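/- Let A, C, H, Λ be real numbers with A ≠ 0, and let X(x,y,z) = (A x − H(((A−C)² + 1) z − Λ), Λ − (1+C²) z, 2C z + y). Define f₁(x,y,z) = y² + 2C(z + Λ/(C²+1)) y + (C²+1) z² + 2Λ(C²−1) z/(C²+1) + Λ²/(C²+1) and f₂(x,y,z) = x − H(Az + y), and set P_X(p) = f₁(p) · (f₂(p))^{−2C/A} (real power). Then P_X is a first integral of X on the open set U = {p ∈ ℝ³ : f₂(p) > 0}; that is, P_X is differentiable on U and DP_X(p)[X(p)] = 0 for every p ∈ U. -/

import Mathlib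

/-- The canonical upper vector field. -/
def Xfield (A C H Λ : ℝ) (p : ℝ × ℝ × ℝ) : ℝ × ℝ × ℝ :=
  (A * p.1 - H * (((A - C) ^ 2 + 1) * p.2.2 - Λ),
   Λ - (1 + C ^ 2) * p.2.2,
   2 * C * p.2.2 + p.2.1)

/-- The Darboux polynomial f₁ of X. -/
noncomputable def fOne (C Λ : ℝ) (p : ℝ × ℝ × ℝ) : ℝ :=
  p.2.1 ^ 2 + 2 * C * (p.2.2 + Λ / (C ^ 2 + 1)) * p.2.1 + (C ^ 2 + 1) * p.2.2 ^ 2 +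
    2 * Λ * (C ^ 2 - 1) * p.2.2 / (C ^ 2 + 1) + Λ ^ 2 / (C ^ 2 + 1)

/-- The Darboux polynomial f₂ of X. -/
def fTwo (A H : ℝ) (p : ℝ × ℝ × ℝ) : ℝ :=
  p.1 - H * (A * p.2.2 + p.2.1)

/-- The Darboux first integral P_X = f₁·f₂^{−2C/A}. -/
noncomputable def PX (A C H Λ : ℝ) (p : ℝ × ℝ × ℝ) : ℝ :=
  fOne C Λ p * (fTwo A H p) ^ (-(2 * C) / A)

/-- P_X is a first integral of X on the set where f₂ > 0. -/
theorem PX_first_integral (A C H Λ : ℝ) (hA : A ≠ 0) :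
    ∀ p ∈ {p : ℝ × ℝ × ℝ | 0 < fTwo A H p},
      DifferentiableAt ℝ (PX A C H Λ) p ∧
        fderiv ℝ (PX A C H Λ) p (Xfield A C H Λ p) = 0 := by
  intro p hp
  have hf2 : 0 < fTwo A H p := hp
  have hC : (C : ℝ) ^ 2 + 1 ≠ 0 := by positivity
  set α : ℝ := -(2 * C) / A with hα
  have hy : HasFDerivAt (fun q : ℝ × ℝ × ℝ => q.2.1)
      ((ContinuousLinearMap.fst ℝ ℝ ℝ).comp (ContinuousLinearMap.snd ℝ ℝ (ℝ × ℝ))) p :=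
    (hasFDerivAt_fst (p := p.2)).comp p (hasFDerivAt_snd (p := p))
  have hz : HasFDerivAt (fun q : ℝ × ℝ × ℝ => q.2.2)
      ((ContinuousLinearMap.snd ℝ ℝ ℝ).comp (ContinuousLinearMap.snd ℝ ℝ (ℝ × ℝ))) p :=
    (hasFDerivAt_snd (p := p.2)).comp p (hasFDerivAt_snd (p := p))
  have hx : HasFDerivAt (fun q : ℝ × ℝ × ℝ => q.1)
      (ContinuousLinearMap.fst ℝ ℝ (ℝ × ℝ)) p := hasFDerivAt_fst
  -- derivative of fTwo
  have h2 : HasFDerivAt (fTwo A H) _ p := hx.sub (((hz.const_mul A).add hy).const_mul H)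
  -- derivative of fOne (via an algebraically equal function)
  have h1g :=
    ((((hy.mul hy).add (((hz.add_const (Λ / (C ^ 2 + 1))).const_mul (2 * C)).mul hy)).add
      ((hz.mul hz).const_mul (C ^ 2 + 1))).add
      (hz.const_mul (2 * Λ * (C ^ 2 - 1) / (C ^ 2 + 1)))).add_const (Λ ^ 2 / (C ^ 2 + 1))
  have heq : (fun q : ℝ × ℝ × ℝ =>
      q.2.1 * q.2.1 + 2 * C * (q.2.2 + Λ / (C ^ 2 + 1)) * q.2.1 + (C ^ 2 + 1) * (q.2.2 * q.2.2) +
        2 * Λ * (C ^ 2 - 1) / (C ^ 2 + 1) * q.2.2 + Λ ^ 2 / (C ^ 2 + 1)) = fOne C Λ := by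
    funext q; simp only [fOne]; ring
  change HasFDerivAt (fun q : ℝ × ℝ × ℝ =>
      q.2.1 * q.2.1 + 2 * C * (q.2.2 + Λ / (C ^ 2 + 1)) * q.2.1 + (C ^ 2 + 1) * (q.2.2 * q.2.2) +
        2 * Λ * (C ^ 2 - 1) / (C ^ 2 + 1) * q.2.2 + Λ ^ 2 / (C ^ 2 + 1)) _ p at h1g
  rw [heq] at h1g
  have hr := h2.rpow_const (Or.inl hf2.ne') (p := α)
  have hP : HasFDerivAt (PX A C H Λ) _ p := h1g.mul hr
  refine ⟨hP.differentiableAt, ?_⟩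
  rw [hP.fderiv]
  have e2 : (Xfield A C H Λ p).1 - H * (A * (Xfield A C H Λ p).2.2 + (Xfield A C H Λ p).2.1)
      = A * fTwo A H p := by
    simp only [Xfield, fTwo]; ring
  simp only [ContinuousLinearMap.add_apply, ContinuousLinearMap.smul_apply,
    ContinuousLinearMap.sub_apply, ContinuousLinearMap.comp_apply,
    ContinuousLinearMap.coe_fst', ContinuousLinearMap.coe_snd', smul_eq_mul,
    Xfield, fOne, fTwo]
  have hspos : (0:ℝ) < p.1 - H * (A * p.2.2 + p.2.1) := hf2
  rw [show ((α : ℝ) - 1) = α - 1 from rfl, Real.rpow_sub_one hspos.ne' α, hα]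
  rw [mul_div_assoc', div_mul_eq_mul_div, mul_div_assoc', div_add' _ _ _ hspos.ne', div_eq_zero_iff]
  left
  field_simp
  ring
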